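/- The series K(z) = Σ_{j=−∞}^{∞} (−1)^j e^{-2j²z²} converges absolutely for every z > 0, K is nondecreasing on (0, ∞), lim_{z→0⁺} K(z) = 0 and lim_{z→∞} K(z) = 1, so K (extended by 0 on (−∞,0]) is a probability distribution function. -/

import Mathlib

open Set Filter

/-- Kolmogorov's distribution function `K(z) = Σ_{j∈ℤ} (−1)^j e^{−2j²z²}`. -/
noncomputable def kolmogorovK (z : ℝ) : ℝ :=
  ∑' j : ℤ, (-1 : ℝ) ^ j * Real.exp (-2 * (j : ℝ) ^ 2 * z ^ 2)

namespace KolmogorovAux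

open Real HurwitzZeta Complex

lemma summable_exp_sq (z : ℝ) (hz : 0 < z) :
    Summable (fun j : ℤ => rexp (-2 * (j:ℝ)^2 * z^2)) := by
  have ht : 0 < 2*z^2/Real.pi := by positivity
  have h := hasSum_int_evenKernel (0:ℝ) ht
  refine h.summable.congr fun n => ?_
  congr 1
  have hπ : (Real.pi) ≠ 0 := Real.pi_ne_zero
  field_simp
  ring

lemma summable_terms (z : ℝ) (hz : 0 < z) :
    Summable (fun j : ℤ => (-1:ℝ)^j * rexp (-2 * (j:ℝ)^2 * z^2)) := by
  refine Summable.of_norm_bounded (summable_exp_sq z hz) fun j => ?_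
  rw [norm_mul, norm_zpow, norm_neg, norm_one, one_zpow, one_mul, Real.norm_eq_abs,
    abs_of_pos (Real.exp_pos _)]

lemma hasSum_K (z : ℝ) (hz : 0 < z) :
    HasSum (fun j : ℤ => (-1:ℝ)^j * rexp (-2 * (j:ℝ)^2 * z^2)) (kolmogorovK z) :=
  (summable_terms z hz).hasSum

lemma hasSum_cos (z : ℝ) (hz : 0 < z) :
    HasSum (fun n : ℤ => (-1:ℝ)^n * rexp (-2 * (n:ℝ)^2 * z^2))
      (cosKernel ((1/2 : ℝ) : UnitAddCircle) (2*z^2/Real.pi)) := by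
  have ht : 0 < 2*z^2/Real.pi := by positivity
  have h := hasSum_int_cosKernel (1/2 : ℝ) ht
  rw [← Complex.hasSum_ofReal]
  refine HasSum.congr_fun h fun n => ?_
  have he : (-Real.pi * (n:ℝ)^2 * (2*z^2/Real.pi)) = -2 * (n:ℝ)^2 * z^2 := by
    field_simp
  rw [he, show 2 * (Real.pi : ℂ) * I * ((1/2 : ℝ) : ℂ) * (n : ℂ) = (n : ℤ) * (Real.pi * I) by
    push_cast; ring, Complex.exp_int_mul, Complex.exp_pi_mul_I]
  push_cast
  ring

lemma K_eq_cos (z : ℝ) (hz : 0 < z) :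
    kolmogorovK z = cosKernel ((1/2 : ℝ) : UnitAddCircle) (2*z^2/Real.pi) :=
  (hasSum_cos z hz).tsum_eq

lemma hasSum_K_pos (z : ℝ) (hz : 0 < z) :
    HasSum (fun n : ℤ => Real.sqrt (Real.pi/2) * (1/z * rexp (-(Real.pi^2*((n:ℝ)+1/2)^2/2 / z^2))))
      (kolmogorovK z) := by
  rw [K_eq_cos z hz]
  set t : ℝ := 2*z^2/Real.pi with ht_def
  have ht : 0 < t := by positivity
  have h1t : 0 < 1/t := by positivity
  have hfe := evenKernel_functional_equation ((1/2 : ℝ) : UnitAddCircle) (1/t)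
  rw [one_div_one_div] at hfe
  have hE := hasSum_int_evenKernel (1/2 : ℝ) h1t
  have hsq : (1:ℝ)/(1/t)^((1:ℝ)/2) = Real.sqrt t := by
    rw [← Real.sqrt_eq_rpow, one_div t, Real.sqrt_inv, one_div, inv_inv]
  rw [hsq] at hfe
  have hst : Real.sqrt t ≠ 0 := by positivity
  have hcos : cosKernel ((1/2 : ℝ) : UnitAddCircle) t
      = (1 / Real.sqrt t) * evenKernel ((1/2 : ℝ) : UnitAddCircle) (1/t) := by
    rw [hfe]; field_simp
  rw [hcos]
  have hmul := hE.mul_left (1 / Real.sqrt t)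
  refine hmul.congr_fun fun n => ?_
  have h1 : 1 / Real.sqrt t = Real.sqrt (Real.pi/2) * (1/z) := by
    rw [one_div, ← Real.sqrt_inv,
      show t⁻¹ = (Real.pi/2) * (1/z)^2 by rw [ht_def]; field_simp,
      Real.sqrt_mul (by positivity) ((1/z)^2), Real.sqrt_sq (by positivity)]
  have h2 : -Real.pi * ((n:ℝ)+1/2)^2 * (1/t) = -(Real.pi^2*((n:ℝ)+1/2)^2/2 / z^2) := by
    rw [ht_def]; field_simp
  rw [h1, h2]; ring

lemma c_ge_one (n : ℤ) : 1 ≤ Real.pi^2*((n:ℝ)+1/2)^2/2 := by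
  have h2 : (1/4:ℝ) ≤ ((n:ℝ)+1/2)^2 := by
    rcases le_or_gt 0 n with hn | hn
    · have : (0:ℝ) ≤ (n:ℝ) := by exact_mod_cast hn
      nlinarith
    · have hn' : (n:ℤ) ≤ -1 := by omega
      have : (n:ℝ) ≤ -1 := by exact_mod_cast hn'
      nlinarith
  nlinarith [Real.pi_gt_three]

lemma K_nonneg (z : ℝ) (hz : 0 < z) : 0 ≤ kolmogorovK z :=
  hasSum_le (fun n => by positivity) hasSum_zero (hasSum_K_pos z hz)

lemma auxSmall {c z₁ z₂ : ℝ} (hc : 1 ≤ c) (h1 : 0 < z₁) (h12 : z₁ ≤ z₂) (h2 : z₂ ≤ 1) :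
    1/z₁ * rexp (-(c / z₁^2)) ≤ 1/z₂ * rexp (-(c / z₂^2)) := by
  have h2p : 0 < z₂ := lt_of_lt_of_le h1 h12
  set d : ℝ := c/z₁^2 - c/z₂^2 with hd_def
  have hd : 0 ≤ d := by
    rw [hd_def, sub_nonneg]
    apply div_le_div_of_nonneg_left (by linarith) (by positivity)
    nlinarith
  have he : 1 + d ≤ rexp d := by linarith [Real.add_one_le_exp d]
  have key : z₂ ≤ z₁ * rexp d := by
    have h3 : z₂ ≤ z₁ * (1 + d) := by
      have hz12 : 0 < z₁^2 * z₂^2 := by positivity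
      have hdz : z₁ * d * (z₁^2 * z₂^2) = c * z₁ * (z₂^2 - z₁^2) := by
        rw [hd_def]; field_simp
      have hfac : 0 ≤ (z₂ - z₁) * (z₁ + z₂ - z₁*z₂^2) :=
        mul_nonneg (by linarith) (by nlinarith)
      have hc1 : 0 ≤ (c - 1) * (z₁ * (z₂^2 - z₁^2)) := by
        apply mul_nonneg (by linarith)
        apply mul_nonneg h1.le
        nlinarith
      nlinarith [hdz, hfac, hc1, hz12, mul_pos h1 h2p]
    calc z₂ ≤ z₁ * (1 + d) := h3
    _ ≤ z₁ * rexp d := by nlinarith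
  have hexp : rexp (-(c / z₁^2)) = rexp (-(c / z₂^2)) * rexp (-d) := by
    rw [← Real.exp_add]; congr 1; rw [hd_def]; ring
  rw [hexp]
  have hEpos := Real.exp_pos (-(c/z₂^2))
  have hRpos := Real.exp_pos (-d)
  have hRd : rexp d * rexp (-d) = 1 := by rw [← Real.exp_add]; simp
  have s1 : z₂ * rexp (-d) ≤ z₁ := by
    have := mul_le_mul_of_nonneg_right key hRpos.le
    rwa [mul_assoc, hRd, mul_one] at this
  rw [div_mul_eq_mul_div, one_mul, div_mul_eq_mul_div, one_mul,
    div_le_div_iff₀ h1 h2p]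
  nlinarith [hEpos, s1]

lemma pairMono {A B : ℝ} (hA : 0 < A) (hAB : A ≤ B) (hB : B ≤ A*(1+(B-A))) :
    MonotoneOn (fun z : ℝ => rexp (-(B*z^2)) - rexp (-(A*z^2))) (Ici 1) := by
  have hder : ∀ x : ℝ, HasDerivAt (fun z : ℝ => rexp (-(B*z^2)) - rexp (-(A*z^2)))
      (rexp (-(B*x^2)) * (-(B*(2*x))) - rexp (-(A*x^2)) * (-(A*(2*x)))) x := by
    intro x
    have hB' : HasDerivAt (fun z : ℝ => -(B*z^2)) (-(B*(2*x))) x := by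
      simpa [Pi.neg_def] using ((hasDerivAt_pow 2 x).const_mul B).neg
    have hA' : HasDerivAt (fun z : ℝ => -(A*z^2)) (-(A*(2*x))) x := by
      simpa [Pi.neg_def] using ((hasDerivAt_pow 2 x).const_mul A).neg
    exact (hB'.exp).sub (hA'.exp)
  apply monotoneOn_of_deriv_nonneg (convex_Ici 1)
  · exact (Continuous.sub (by continuity) (by continuity)).continuousOn
  · intro x _
    exact (hder x).differentiableAt.differentiableWithinAt
  · intro x hx
    rw [interior_Ici] at hx
    rw [(hder x).deriv]
    have hx1 : (1:ℝ) < x := hx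
    have hx0 : 0 < x := by linarith
    have hx2 : 1 ≤ x^2 := by nlinarith
    have he2 : (B-A)*x^2 + 1 ≤ rexp ((B-A)*x^2) := Real.add_one_le_exp _
    have hkey : B * rexp (-(B*x^2)) ≤ A * rexp (-(A*x^2)) := by
      have e1 : rexp (-(B*x^2)) = rexp (-(A*x^2)) * rexp (-((B-A)*x^2)) := by
        rw [← Real.exp_add]; congr 1; ring
      have e3 : rexp ((B-A)*x^2) * rexp (-((B-A)*x^2)) = 1 := by
        rw [← Real.exp_add]; simp
      have hBA : B ≤ A * rexp ((B-A)*x^2) := by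
        calc B ≤ A*(1+(B-A)) := hB
        _ ≤ A * rexp ((B-A)*x^2) := by
            apply mul_le_mul_of_nonneg_left _ hA.le
            nlinarith [sub_nonneg.2 hAB]
      have s1 : B * rexp (-((B-A)*x^2)) ≤ A := by
        have := mul_le_mul_of_nonneg_right hBA (Real.exp_pos (-((B-A)*x^2))).le
        rwa [mul_assoc, e3, mul_one] at this
      have s2 := mul_le_mul_of_nonneg_right s1 (Real.exp_pos (-(A*x^2))).le
      rw [e1]
      nlinarith [s2]
    nlinarith [Real.exp_pos (-(B*x^2)), Real.exp_pos (-(A*x^2))]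

lemma hasSum_pairs (z : ℝ) (hz : 0 < z) :
    HasSum (fun k : ℕ => 2 * (rexp (-(2*(2*(k:ℝ)+2)^2 * z^2)) - rexp (-(2*(2*(k:ℝ)+1)^2 * z^2))))
      (kolmogorovK z - 1) := by
  have hK := hasSum_K z hz
  set a : ℤ → ℝ := fun j => (-1:ℝ)^j * rexp (-2 * (j:ℝ)^2 * z^2) with ha
  have ha0 : a 0 = 1 := by simp [ha]
  have haNat : ∀ m : ℕ, a (m:ℤ) = (-1:ℝ)^m * rexp (-2*(m:ℝ)^2*z^2) := by
    intro m; simp [ha, zpow_natCast]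
  have hanegn : ∀ n : ℕ, a (-(n:ℤ)) = a n := by
    intro n
    simp only [ha]
    rw [zpow_neg, zpow_natCast, ← inv_pow, inv_neg, inv_one]
    push_cast
    ring_nf
  have S2 := hK.nat_add_neg
  have S3 : HasSum (fun n : ℕ => 2 * a n) (kolmogorovK z + 1) := by
    rw [← ha0]
    refine S2.congr_fun fun n => ?_
    rw [hanegn]; ring
  have S3' : HasSum (fun n : ℕ => 2 * a (n:ℤ))
      ((kolmogorovK z - 1) + ∑ i ∈ Finset.range 1, 2 * a (i:ℤ)) := by
    rw [Finset.sum_range_one]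
    norm_num [ha0]
    convert S3 using 1
    ring
  have S4 : HasSum (fun n : ℕ => 2 * a ((n:ℤ) + 1)) (kolmogorovK z - 1) := by
    have h := (hasSum_nat_add_iff (f := fun n : ℕ => 2 * a (n:ℤ)) 1).mpr S3'
    refine h.congr_fun fun n => ?_
    push_cast
    ring_nf
  have hsummable := S4.summable
  have hinj2 : Function.Injective (fun k : ℕ => 2 * k) := fun a b h => by dsimp at h; omega
  have hinj21 : Function.Injective (fun k : ℕ => 2 * k + 1) := fun a b h => by dsimp at h; omega
  obtain ⟨A, he⟩ := hsummable.comp_injective hinj2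
  obtain ⟨B, ho⟩ := hsummable.comp_injective hinj21
  have he' : HasSum (fun k : ℕ => 2 * a (((2*k : ℕ):ℤ) + 1)) A := he
  have ho' : HasSum (fun k : ℕ => 2 * a (((2*k+1 : ℕ):ℤ) + 1)) B := ho
  have htot := HasSum.even_add_odd (f := fun n : ℕ => 2 * a ((n:ℤ) + 1)) he' ho'
  have huniq := htot.unique S4
  have hfin := he'.add ho'
  rw [huniq] at hfin
  refine hfin.congr_fun fun k => ?_
  have e1 : ((2*k : ℕ) : ℤ) + 1 = ((2*k+1 : ℕ) : ℤ) := by push_cast; ring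
  have e2 : ((2*k+1 : ℕ) : ℤ) + 1 = ((2*k+2 : ℕ) : ℤ) := by push_cast; ring
  have hodd : (-1:ℝ)^(2*k+1) = -1 := Odd.neg_one_pow ⟨k, by ring⟩
  have heven : (-1:ℝ)^(2*k+2) = 1 := Even.neg_one_pow ⟨k+1, by ring⟩
  simp only [e1, e2, haNat, hodd, heven]
  push_cast
  ring_nf

lemma monoSmall : MonotoneOn kolmogorovK (Ioc (0:ℝ) 1) := by
  intro z₁ h₁ z₂ h₂ h12
  refine hasSum_le (fun n => ?_) (hasSum_K_pos z₁ h₁.1) (hasSum_K_pos z₂ h₂.1)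
  have hc := c_ge_one n
  have := auxSmall hc h₁.1 h12 h₂.2
  exact mul_le_mul_of_nonneg_left this (Real.sqrt_nonneg _)

lemma monoLarge : MonotoneOn kolmogorovK (Ici (1:ℝ)) := by
  intro z₁ h₁ z₂ h₂ h12
  have hz₁ : (0:ℝ) < z₁ := lt_of_lt_of_le one_pos h₁
  have hz₂ : (0:ℝ) < z₂ := lt_of_lt_of_le one_pos h₂
  have hle := hasSum_le (fun k => ?_) (hasSum_pairs z₁ hz₁) (hasSum_pairs z₂ hz₂)
  · linarith
  · set Ak : ℝ := 2*(2*(k:ℝ)+1)^2 with hAk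
    set Bk : ℝ := 2*(2*(k:ℝ)+2)^2 with hBk
    have hA : 0 < Ak := by positivity
    have hAB : Ak ≤ Bk := by rw [hAk, hBk]; nlinarith [Nat.cast_nonneg (α := ℝ) k]
    have hB : Bk ≤ Ak*(1+(Bk-Ak)) := by
      rw [hAk, hBk]; nlinarith [Nat.cast_nonneg (α := ℝ) k, sq_nonneg (k:ℝ)]
    have := pairMono hA hAB hB h₁ h₂ h12
    simp only at this
    nlinarith [this]

lemma K_mono : MonotoneOn kolmogorovK (Ioi (0:ℝ)) := by
  intro z₁ h₁ z₂ h₂ h12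
  rcases le_or_gt z₂ 1 with hz2 | hz2
  · exact monoSmall ⟨h₁, le_trans h12 hz2⟩ ⟨h₂, hz2⟩ h12
  · rcases le_or_gt 1 z₁ with hz1 | hz1
    · exact monoLarge hz1 hz2.le h12
    · calc kolmogorovK z₁ ≤ kolmogorovK 1 :=
        monoSmall ⟨h₁, hz1.le⟩ ⟨one_pos, le_refl 1⟩ hz1.le
      _ ≤ kolmogorovK z₂ := monoLarge (by simp : (1:ℝ) ∈ Ici 1) hz2.le hz2.le

noncomputable def Ebig : ℝ := evenKernel ((1/2 : ℝ) : UnitAddCircle) (Real.pi/2)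

lemma hasSum_E : HasSum (fun n : ℤ => rexp (-(Real.pi^2*((n:ℝ)+1/2)^2/2))) Ebig := by
  have h := hasSum_int_evenKernel (1/2 : ℝ) (by positivity : (0:ℝ) < Real.pi/2)
  refine h.congr_fun fun n => ?_
  congr 1
  ring

lemma E_nonneg : 0 ≤ Ebig :=
  hasSum_le (fun n => (Real.exp_pos _).le) hasSum_zero hasSum_E

lemma K_le_small (z : ℝ) (hz : 0 < z) (hz1 : z ≤ 1) :
    kolmogorovK z ≤ (Real.sqrt (Real.pi/2) * rexp (1/2) * Ebig) * (1/z * rexp (-(1/(2*z^2)))) := by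
  have hg := hasSum_E.mul_left (Real.sqrt (Real.pi/2) * (1/z * rexp (-(1/(2*z^2)))) * rexp (1/2))
  have hle := hasSum_le (fun n => ?_) (hasSum_K_pos z hz) hg
  · calc kolmogorovK z ≤ _ := hle
    _ = _ := by ring
  · have hc := c_ge_one n
    have h1z : (0:ℝ) ≤ Real.sqrt (Real.pi/2) * (1/z) := by positivity
    have hz2 : (0:ℝ) < z^2 := by positivity
    calc Real.sqrt (Real.pi/2) * (1/z * rexp (-(Real.pi^2*((n:ℝ)+1/2)^2/2 / z^2)))
        = (Real.sqrt (Real.pi/2) * (1/z)) * rexp (-(Real.pi^2*((n:ℝ)+1/2)^2/2 / z^2)) := by ring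
    _ ≤ (Real.sqrt (Real.pi/2) * (1/z)) *
          (rexp (-(1/(2*z^2))) * (rexp (1/2) * rexp (-(Real.pi^2*((n:ℝ)+1/2)^2/2)))) := by
        apply mul_le_mul_of_nonneg_left _ h1z
        rw [← Real.exp_add, ← Real.exp_add, Real.exp_le_exp]
        set c : ℝ := Real.pi^2*((n:ℝ)+1/2)^2/2 with hcdef
        rw [show -(c/z^2) = (-c)/z^2 by ring,
          show -(1/(2*z^2)) + (1/2 + -c) = (-(1/2) + (1/2 + -c)*z^2)/z^2 by field_simp,
          div_le_div_iff₀ hz2 hz2]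
        have h' : (0:ℝ) ≤ c - 1/2 := by linarith
        have h'' : (0:ℝ) ≤ 1 - z^2 := by nlinarith
        nlinarith [mul_nonneg (mul_nonneg h' h'') hz2.le]
    _ = _ := by ring

lemma tendsto_base : Tendsto (fun u : ℝ => u * rexp (-(u^2/2))) atTop (nhds 0) := by
  have h0 : Tendsto (fun x : ℝ => x^1 * rexp (-x)) atTop (nhds 0) :=
    tendsto_pow_mul_exp_neg_atTop_nhds_zero 1
  have hdiv : Tendsto (fun u : ℝ => u/2) atTop atTop :=
    tendsto_id.atTop_div_const (by norm_num)
  have hupper : Tendsto (fun u : ℝ => 2*((u/2) * rexp (-(u/2)))) atTop (nhds 0) := by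
    have := (h0.comp hdiv).const_mul (2:ℝ)
    simpa using this
  apply tendsto_of_tendsto_of_tendsto_of_le_of_le' tendsto_const_nhds hupper
  · filter_upwards [eventually_ge_atTop (1:ℝ)] with u hu
    positivity
  · filter_upwards [eventually_ge_atTop (1:ℝ)] with u hu
    have h1 : rexp (-(u^2/2)) ≤ rexp (-(u/2)) := by
      rw [Real.exp_le_exp]; nlinarith
    calc u * rexp (-(u^2/2)) ≤ u * rexp (-(u/2)) := by
          apply mul_le_mul_of_nonneg_left h1 (by linarith)
    _ = 2*((u/2) * rexp (-(u/2))) := by ring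

lemma tendsto_K_zero : Tendsto kolmogorovK (nhdsWithin 0 (Ioi (0:ℝ))) (nhds 0) := by
  set C : ℝ := Real.sqrt (Real.pi/2) * rexp (1/2) * Ebig with hCdef
  have hC : 0 ≤ C := by
    apply mul_nonneg (by positivity) E_nonneg
  have hinv : Tendsto (fun z : ℝ => 1/z) (nhdsWithin 0 (Ioi (0:ℝ))) atTop :=
    tendsto_inv_nhdsGT_zero.congr fun z => (one_div z).symm
  have hcomp : Tendsto (fun z : ℝ => C * ((1/z) * rexp (-((1/z)^2/2))))
      (nhdsWithin 0 (Ioi (0:ℝ))) (nhds 0) := by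
    have := (tendsto_base.comp hinv).const_mul C
    simpa using this
  have hφ : Tendsto (fun z : ℝ => C * (1/z * rexp (-(1/(2*z^2)))))
      (nhdsWithin 0 (Ioi (0:ℝ))) (nhds 0) := by
    refine hcomp.congr' ?_
    filter_upwards [self_mem_nhdsWithin] with z hz
    have hz0 : (z:ℝ) ≠ 0 := ne_of_gt hz
    congr 2
    field_simp
  apply tendsto_of_tendsto_of_tendsto_of_le_of_le' tendsto_const_nhds hφ
  · filter_upwards [self_mem_nhdsWithin] with z hz
    exact K_nonneg z hz
  · filter_upwards [Ioc_mem_nhdsGT_of_mem (Set.left_mem_Ico.mpr one_pos)] with z hz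
    exact K_le_small z hz.1 hz.2

lemma bound_inf (z : ℝ) (hz1 : 1 ≤ z) :
    |kolmogorovK z - 1| ≤ rexp (-(2*(z^2-1))) * (∑' j : ℤ, rexp (-2*(j:ℝ)^2)) := by
  have hz : (0:ℝ) < z := lt_of_lt_of_le one_pos hz1
  have hsum := summable_terms z hz
  have h2 : Summable (fun j : ℤ => rexp (-2*(j:ℝ)^2)) := by
    have := summable_exp_sq 1 one_pos
    simpa using this
  have heq := Summable.tsum_eq_add_tsum_ite hsum 0
  have ha0 : ((-1:ℝ)^(0:ℤ) * rexp (-2 * ((0:ℤ):ℝ)^2 * z^2)) = 1 := by norm_num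
  have hK : kolmogorovK z = 1 + ∑' j : ℤ,
      (if j = 0 then 0 else (-1:ℝ)^j * rexp (-2 * (j:ℝ)^2 * z^2)) := by
    rw [kolmogorovK, heq, ha0]
  have hbnd : ∀ j : ℤ, ‖(if j = 0 then 0 else (-1:ℝ)^j * rexp (-2 * (j:ℝ)^2 * z^2))‖ ≤
      rexp (-(2*(z^2-1))) * rexp (-2*(j:ℝ)^2) := by
    intro j
    by_cases hj : j = 0
    · simp [hj]; positivity
    · rw [if_neg hj, norm_mul, norm_zpow, norm_neg, norm_one, one_zpow, one_mul,
        Real.norm_eq_abs, abs_of_pos (Real.exp_pos _), ← Real.exp_add, Real.exp_le_exp]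
      have h1 : (1:ℤ) ≤ |j| := Int.one_le_abs hj
      have h1' : (1:ℝ) ≤ |(j:ℝ)| := by
        rw [← Int.cast_abs]; exact_mod_cast h1
      have hj2 : (1:ℝ) ≤ (j:ℝ)^2 := by nlinarith [_root_.sq_abs ((j:ℝ))]
      nlinarith [mul_nonneg (sub_nonneg.2 hj2) (sub_nonneg.2 (by nlinarith : (1:ℝ) ≤ z^2))]
  have hsn : Summable (fun j : ℤ =>
      ‖(if j = 0 then 0 else (-1:ℝ)^j * rexp (-2 * (j:ℝ)^2 * z^2))‖) :=
    Summable.of_nonneg_of_le (fun j => norm_nonneg _) hbnd (h2.mul_left _)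
  calc |kolmogorovK z - 1|
      = ‖∑' j : ℤ, (if j = 0 then 0 else (-1:ℝ)^j * rexp (-2 * (j:ℝ)^2 * z^2))‖ := by
        rw [hK]; congr 1; ring
    _ ≤ ∑' j : ℤ, ‖(if j = 0 then 0 else (-1:ℝ)^j * rexp (-2 * (j:ℝ)^2 * z^2))‖ :=
        norm_tsum_le_tsum_norm hsn
    _ ≤ ∑' j : ℤ, rexp (-(2*(z^2-1))) * rexp (-2*(j:ℝ)^2) :=
        Summable.tsum_le_tsum hbnd hsn (h2.mul_left _)
    _ = rexp (-(2*(z^2-1))) * (∑' j : ℤ, rexp (-2*(j:ℝ)^2)) := tsum_mul_left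

lemma tendsto_K_one : Tendsto kolmogorovK atTop (nhds 1) := by
  set E2 : ℝ := ∑' j : ℤ, rexp (-2*(j:ℝ)^2) with hE2
  have hg : Tendsto (fun z : ℝ => rexp (-(2*(z^2-1))) * E2) atTop (nhds 0) := by
    have h1 : Tendsto (fun z : ℝ => z^2) atTop atTop := tendsto_pow_atTop two_ne_zero
    have h2 : Tendsto (fun z : ℝ => 2*(z^2-1)) atTop atTop := by
      have h21 := tendsto_atTop_add_const_right atTop (-1 : ℝ) h1
      have h22 := h21.const_mul_atTop (two_pos : (0:ℝ) < 2)
      refine h22.congr fun z => by ring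
    have h3 : Tendsto (fun z : ℝ => -(2*(z^2-1))) atTop atBot := tendsto_neg_atBot_iff.mpr h2
    have := (Real.tendsto_exp_atBot.comp h3).mul_const E2
    simpa using this
  have hsq : Tendsto (fun z : ℝ => kolmogorovK z - 1) atTop (nhds 0) := by
    apply squeeze_zero_norm' _ hg
    filter_upwards [eventually_ge_atTop (1:ℝ)] with z hz
    exact bound_inf z hz
  have := hsq.add_const 1
  simpa using this

end KolmogorovAux

theorem stmt_18 :
    (∀ z : ℝ, 0 < z →
      Summable (fun j : ℤ => |(-1 : ℝ) ^ j * Real.exp (-2 * (j : ℝ) ^ 2 * z ^ 2)|)) ∧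
    MonotoneOn kolmogorovK (Ioi (0 : ℝ)) ∧
    Tendsto kolmogorovK (nhdsWithin 0 (Ioi (0 : ℝ))) (nhds 0) ∧
    Tendsto kolmogorovK atTop (nhds 1) ∧
    Monotone (fun z : ℝ => if z ≤ 0 then 0 else kolmogorovK z) := by
  refine ⟨?_, KolmogorovAux.K_mono, KolmogorovAux.tendsto_K_zero, KolmogorovAux.tendsto_K_one, ?_⟩
  · intro z hz
    refine (KolmogorovAux.summable_exp_sq z hz).congr fun j => ?_
    rw [abs_mul, show |(-1:ℝ)^j| = 1 by rw [← Real.norm_eq_abs, norm_zpow, norm_neg, norm_one, one_zpow],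
      one_mul, abs_of_pos (Real.exp_pos _)]
  · intro x y hxy
    by_cases hx : x ≤ 0
    · by_cases hy : y ≤ 0
      · simp [hx, hy]
      · simp only [if_pos hx, if_neg hy]
        exact KolmogorovAux.K_nonneg y (lt_of_not_ge hy)
    · have hy : ¬ y ≤ 0 := fun h => hx (le_trans hxy h)
      simp only [if_neg hx, if_neg hy]
      exact KolmogorovAux.K_mono (lt_of_not_ge hx) (lt_of_not_ge hy) hxy
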